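/- Let μ₀ be a probability measure on X and Φ, Φ_N, R, R_N : X → ℝ nonnegative measurable functions. Let Z = ∫ exp(-Φ - R) dμ₀ and Z_N = ∫ exp(-Φ_N - R_N) dμ₀. Suppose X_ε ⊆ X is measurable with μ₀(X_ε) ≥ 1 - ε, |Φ(u) - Φ_N(u)| ≤ a for u ∈ X_ε, and |R(u) - R_N(u)| ≤ b for u ∈ X_ε. Then |Z - Z_N| ≤ ε + a + b. -/

import Mathlib

open MeasureTheory Real

lemma exp_lip_aux {s t : ℝ} (hs : s ≤ 0) (ht : t ≤ 0) :
    |Real.exp s - Real.exp t| ≤ |s - t| := by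
  wlog h : t ≤ s generalizing s t
  · rw [abs_sub_comm, abs_sub_comm s t]
    exact this ht hs (le_of_lt (not_le.1 h))
  rw [abs_of_nonneg (sub_nonneg.2 (Real.exp_le_exp.2 h)), abs_of_nonneg (sub_nonneg.2 h)]
  have h1 := Real.add_one_le_exp (t - s)
  have h2 : Real.exp s ≤ 1 := Real.exp_le_one_iff.2 hs
  have h3 : Real.exp s - Real.exp t = Real.exp s * (1 - Real.exp (t - s)) := by
    rw [Real.exp_sub]
    field_simp
  nlinarith [Real.exp_pos s]

theorem normalization_constants_close
    {X : Type*} [MeasurableSpace X]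
    (μ₀ : Measure X) [IsProbabilityMeasure μ₀]
    (Φ ΦN R RN : X → ℝ)
    (hΦm : Measurable Φ) (hΦNm : Measurable ΦN)
    (hRm : Measurable R) (hRNm : Measurable RN)
    (hΦ0 : ∀ u, 0 ≤ Φ u) (hΦN0 : ∀ u, 0 ≤ ΦN u)
    (hR0 : ∀ u, 0 ≤ R u) (hRN0 : ∀ u, 0 ≤ RN u)
    (ε a b : ℝ) (hε : 0 ≤ ε) (ha : 0 ≤ a) (hb : 0 ≤ b)
    (Xε : Set X) (hXεm : MeasurableSet Xε)
    (hXε : ENNReal.ofReal (1 - ε) ≤ μ₀ Xε)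
    (hΦa : ∀ u ∈ Xε, |Φ u - ΦN u| ≤ a)
    (hRb : ∀ u ∈ Xε, |R u - RN u| ≤ b) :
    |(∫ u, Real.exp (-(Φ u) - R u) ∂μ₀) - ∫ u, Real.exp (-(ΦN u) - RN u) ∂μ₀|
      ≤ ε + a + b := by
  set f : X → ℝ := fun u => Real.exp (-(Φ u) - R u) with hf_def
  set g : X → ℝ := fun u => Real.exp (-(ΦN u) - RN u) with hg_def
  have hfm : Measurable f := (hΦm.neg.sub hRm).exp
  have hgm : Measurable g := (hΦNm.neg.sub hRNm).exp
  have hf01 : ∀ u, 0 ≤ f u ∧ f u ≤ 1 := fun u =>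
    ⟨(Real.exp_pos _).le, Real.exp_le_one_iff.2 (by linarith [hΦ0 u, hR0 u])⟩
  have hg01 : ∀ u, 0 ≤ g u ∧ g u ≤ 1 := fun u =>
    ⟨(Real.exp_pos _).le, Real.exp_le_one_iff.2 (by linarith [hΦN0 u, hRN0 u])⟩
  have hfi : Integrable f μ₀ := by
    refine Integrable.mono' (integrable_const 1) hfm.aestronglyMeasurable
      (Filter.Eventually.of_forall fun u => ?_)
    rw [Real.norm_eq_abs, abs_of_nonneg (hf01 u).1]; exact (hf01 u).2
  have hgi : Integrable g μ₀ := by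
    refine Integrable.mono' (integrable_const 1) hgm.aestronglyMeasurable
      (Filter.Eventually.of_forall fun u => ?_)
    rw [Real.norm_eq_abs, abs_of_nonneg (hg01 u).1]; exact (hg01 u).2
  have hdiff : Integrable (fun u => |f u - g u|) μ₀ := (hfi.sub hgi).abs
  have key : |(∫ u, f u ∂μ₀) - ∫ u, g u ∂μ₀| ≤ ∫ u, |f u - g u| ∂μ₀ := by
    rw [← integral_sub hfi hgi]
    simpa [Real.norm_eq_abs] using norm_integral_le_integral_norm (fun u => f u - g u) (μ := μ₀)
  have hsplit : (∫ u, |f u - g u| ∂μ₀)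
      = (∫ u in Xε, |f u - g u| ∂μ₀) + ∫ u in Xεᶜ, |f u - g u| ∂μ₀ :=
    (integral_add_compl hXεm hdiff).symm
  -- bound on Xε
  have hbound1 : (∫ u in Xε, |f u - g u| ∂μ₀) ≤ a + b := by
    have h1 : (∫ u in Xε, |f u - g u| ∂μ₀) ≤ ∫ _u in Xε, (a + b) ∂μ₀ := by
      refine setIntegral_mono_on hdiff.integrableOn (integrableOn_const (measure_ne_top _ _)) hXεm fun u hu => ?_
      have hle : |(-(Φ u) - R u) - (-(ΦN u) - RN u)| ≤ a + b := by
        have := hΦa u hu; have := hRb u hu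
        calc |(-(Φ u) - R u) - (-(ΦN u) - RN u)|
            = |(ΦN u - Φ u) + (RN u - R u)| := by ring_nf
          _ ≤ |ΦN u - Φ u| + |RN u - R u| := abs_add_le _ _
          _ ≤ a + b := by rw [abs_sub_comm (ΦN u), abs_sub_comm (RN u)]; linarith
      exact le_trans (exp_lip_aux (by linarith [hΦ0 u, hR0 u]) (by linarith [hΦN0 u, hRN0 u])) hle
    have h2 : (∫ _u in Xε, (a + b) ∂μ₀) = (a + b) * (μ₀ Xε).toReal := by
      simp [Measure.restrict_apply, mul_comm, measureReal_def]
    have h3 : (μ₀ Xε).toReal ≤ 1 := by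
      have := prob_le_one (μ := μ₀) (s := Xε)
      simpa using ENNReal.toReal_mono (by norm_num) this
    nlinarith
  -- bound on complement
  have hmeas_compl : (μ₀ Xεᶜ).toReal ≤ ε := by
    have h1 : 1 - ε ≤ (μ₀ Xε).toReal := by
      rcases le_or_gt (1 - ε) 0 with h | h
      · exact le_trans h ENNReal.toReal_nonneg
      · exact (ENNReal.ofReal_le_iff_le_toReal (measure_ne_top _ _)).1 hXε
    have h2 : μ₀ Xεᶜ = 1 - μ₀ Xε := prob_compl_eq_one_sub hXεm
    have h3 : (μ₀ Xεᶜ).toReal = 1 - (μ₀ Xε).toReal := by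
      rw [h2, ENNReal.toReal_sub_of_le (prob_le_one) (by norm_num)]
      norm_num
    linarith
  have hbound2 : (∫ u in Xεᶜ, |f u - g u| ∂μ₀) ≤ ε := by
    have h1 : (∫ u in Xεᶜ, |f u - g u| ∂μ₀) ≤ ∫ _u in Xεᶜ, (1:ℝ) ∂μ₀ := by
      refine setIntegral_mono_on hdiff.integrableOn (integrableOn_const (measure_ne_top _ _)) hXεm.compl fun u _ => ?_
      rw [abs_sub_le_iff]
      constructor <;> [linarith [(hf01 u).2, (hg01 u).1]; linarith [(hg01 u).2, (hf01 u).1]]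
    have h2 : (∫ _u in Xεᶜ, (1:ℝ) ∂μ₀) = (μ₀ Xεᶜ).toReal := by simp [measureReal_def]
    linarith
  linarith
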